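/- Let g : (0, ∞) → [0, ∞) be integrable, let c ∈ (0, 1) and s > 0, and define g'(y) = c·g(y) for 0 < y < s and g'(y) = g(y) for y ≥ s. Let y₀ > 0 and suppose ∫₀^{min(s, y₀)} g(y) dy > 0 and ∫_{max(s, y₀)}^∞ g(y) dy > 0. Then the normalized left mass strictly decreases: ∫₀^{y₀} g'(y) dy / ∫₀^∞ g'(y) dy < ∫₀^{y₀} g(y) dy / ∫₀^∞ g(y) dy. -/

import Mathlib

open MeasureTheory

/-- Let `g : (0, ∞) → [0, ∞)` be integrable, let `c ∈ (0, 1)` and `s > 0`, and define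
`g'(y) = c·g(y)` for `0 < y < s` and `g'(y) = g(y)` for `y ≥ s`. Let `y₀ > 0` and suppose
`∫₀^{min(s, y₀)} g(y) dy > 0` and `∫_{max(s, y₀)}^∞ g(y) dy > 0`. Then the normalized
left mass strictly decreases:
`∫₀^{y₀} g'(y) dy / ∫₀^∞ g'(y) dy < ∫₀^{y₀} g(y) dy / ∫₀^∞ g(y) dy`. -/
theorem stmt_10 (g g' : ℝ → ℝ) (c s y₀ : ℝ)
    (hc : c ∈ Set.Ioo (0 : ℝ) 1) (hs : 0 < s) (hy₀ : 0 < y₀)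
    (hg_nonneg : ∀ y, 0 < y → 0 ≤ g y)
    (hg_int : IntegrableOn g (Set.Ioi 0))
    (hg'_lo : ∀ y, 0 < y → y < s → g' y = c * g y)
    (hg'_hi : ∀ y, s ≤ y → g' y = g y)
    (hL : 0 < ∫ y in Set.Ioo 0 (min s y₀), g y)
    (hR : 0 < ∫ y in Set.Ioi (max s y₀), g y) :
    (∫ y in Set.Ioo 0 y₀, g' y) / (∫ y in Set.Ioi 0, g' y) <
      (∫ y in Set.Ioo 0 y₀, g y) / (∫ y in Set.Ioi 0, g y) := by
  obtain ⟨hc0, hc1⟩ := hc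
  set d : ℝ := 1 - c with hdc
  have hd : 0 < d := by simp only [hdc, sub_pos]; exact hc1
  set A : ℝ := ∫ y in Set.Ioo 0 y₀, g y with hA
  set S : ℝ := ∫ y in Set.Ioo 0 s, g y with hS
  set L : ℝ := ∫ y in Set.Ioo 0 (min s y₀), g y with hLdef
  set B : ℝ := ∫ y in Set.Ioi 0, g y with hB
  have hg_nn_ae : 0 ≤ᵐ[volume.restrict (Set.Ioi (0:ℝ))] g := by
    rw [Filter.EventuallyLE, ae_restrict_iff' measurableSet_Ioi]
    exact Filter.Eventually.of_forall fun y hy => hg_nonneg y hy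
  -- monotonicity helper
  have hmono : ∀ u v : Set ℝ, u ⊆ v → v ⊆ Set.Ioi (0:ℝ) →
      (∫ y in u, g y) ≤ ∫ y in v, g y := fun u v huv hv =>
    setIntegral_mono_set (hg_int.mono_set hv)
      (hg_nn_ae.filter_mono (ae_mono (Measure.restrict_mono hv le_rfl)))
      huv.eventuallyLE
  -- additivity helper: for a > 0, ∫_{(0,a)} g + ∫_{(a,∞)} g ≤ B
  have haux : ∀ a : ℝ, 0 < a →
      (∫ y in Set.Ioo 0 a, g y) + (∫ y in Set.Ioi a, g y) ≤ B := by
    intro a ha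
    rw [← setIntegral_union (by
        exact Set.disjoint_left.mpr fun y hy hy' => absurd hy.2 (not_lt.mpr (le_of_lt hy')))
      measurableSet_Ioi (hg_int.mono_set Set.Ioo_subset_Ioi_self)
      (hg_int.mono_set (Set.Ioi_subset_Ioi ha.le))]
    exact hmono _ _ (Set.union_subset Set.Ioo_subset_Ioi_self (Set.Ioi_subset_Ioi ha.le))
      Set.Subset.rfl
  have hLS : L ≤ S := hmono _ _
    (Set.Ioo_subset_Ioo le_rfl (min_le_left _ _)) Set.Ioo_subset_Ioi_self
  have hSB : S ≤ B := hmono _ _ Set.Ioo_subset_Ioi_self Set.Subset.rfl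
  have hLA : L ≤ A := hmono _ _
    (Set.Ioo_subset_Ioo le_rfl (min_le_right _ _)) Set.Ioo_subset_Ioi_self
  -- g' as g minus d times indicator of (0,s)
  have hind_int : Integrable ((Set.Ioo (0:ℝ) s).indicator g) := by
    rw [integrable_indicator_iff measurableSet_Ioo]
    exact hg_int.mono_set Set.Ioo_subset_Ioi_self
  have hrepr : ∀ y ∈ Set.Ioi (0:ℝ), g' y = g y - d * (Set.Ioo 0 s).indicator g y := by
    intro y hy
    by_cases h : y < s
    · rw [hg'_lo y hy h, Set.indicator_of_mem (Set.mem_Ioo.mpr ⟨hy, h⟩)]; ring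
    · rw [hg'_hi y (not_lt.mp h), Set.indicator_of_notMem (fun hm => h hm.2)]; ring
  have hcomp : ∀ u : Set ℝ, MeasurableSet u → u ⊆ Set.Ioi (0:ℝ) →
      (∫ y in u, g' y) = (∫ y in u, g y) - d * ∫ y in u ∩ Set.Ioo 0 s, g y := by
    intro u hu hsub
    rw [setIntegral_congr_fun hu (fun y hy => hrepr y (hsub hy)),
      integral_sub (hg_int.mono_set hsub)
        ((hind_int.const_mul d).integrableOn),
      integral_const_mul, setIntegral_indicator measurableSet_Ioo]
  have h1 : (∫ y in Set.Ioo 0 y₀, g' y) = A - d * L := by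
    rw [hcomp _ measurableSet_Ioo Set.Ioo_subset_Ioi_self]
    congr 2
    rw [Set.Ioo_inter_Ioo]
    congr 1; · simp; · simp [min_comm]
  have h2 : (∫ y in Set.Ioi 0, g' y) = B - d * S := by
    rw [hcomp _ measurableSet_Ioi Set.Subset.rfl]
    congr 2
    rw [Set.Ioi_inter_Ioo]
    simp [hs.le]
    rfl
  -- key inequality A * S < L * B
  have key : A * S < L * B := by
    rcases le_total s y₀ with h | h
    · have hmin : min s y₀ = s := min_eq_left h
      have hmax : max s y₀ = y₀ := max_eq_right h
      have hLS' : L = S := by rw [hLdef, hS, hmin]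
      have hAB : A < B := by
        have := haux y₀ hy₀
        rw [hmax] at hR
        linarith
      calc A * S < B * S := by
            exact mul_lt_mul_of_pos_right hAB (by rw [← hLS']; exact hL)
        _ = L * B := by rw [hLS']; ring
    · have hmin : min s y₀ = y₀ := min_eq_right h
      have hmax : max s y₀ = s := max_eq_left h
      have hLA' : L = A := by rw [hLdef, hA, hmin]
      have hSB' : S < B := by
        have := haux s hs
        rw [hmax] at hR
        linarith
      calc A * S < A * B := by
            exact mul_lt_mul_of_pos_left hSB' (by rw [← hLA']; exact hL)
        _ = L * B := by rw [hLA']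
  have hBS : 0 < B - d * S := by nlinarith
  have hBpos : 0 < B := lt_of_lt_of_le hL (le_trans hLS hSB)
  rw [h1, h2, div_lt_div_iff₀ hBS hBpos]
  nlinarith [mul_lt_mul_of_pos_left key hd]
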